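/- If k ≥ l ≥ 1, both k and l are odd, and (k,l) ≠ (1,1), then p_3(k,l) > p_3(k+1, l-1), where p_3(a,b) is the number of vector partitions of (a,b) into exactly 3 nonzero parts in Z_{≥0}^2. -/

import Mathlib

namespace VP3

abbrev P := ℕ × ℕ
abbrev T3 := P × P × P

def r (x y : P) : Prop := x.1 < y.1 ∨ (x.1 = y.1 ∧ x.2 ≤ y.2)

instance : DecidableRel r := fun x y => by unfold r; infer_instance

lemma r_total (x y : P) : r x y ∨ r y x := by unfold r; omega
lemma r_antisymm {x y : P} (h1 : r x y) (h2 : r y x) : x = y := by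
  obtain ⟨a,b⟩ := x; obtain ⟨c,d⟩ := y
  simp only [r, Prod.mk.injEq] at *; omega
lemma r_refl (x : P) : r x x := by unfold r; omega

def mult (t : T3) : Multiset P := {t.1, t.2.1, t.2.2}

def srt (t : T3) : Prop := r t.1 t.2.1 ∧ r t.2.1 t.2.2

def sort3 (t : T3) : T3 :=
  if r t.1 t.2.1 then
    if r t.2.2 t.1 then (t.2.2, t.1, t.2.1)
    else if r t.2.2 t.2.1 then (t.1, t.2.2, t.2.1) else (t.1, t.2.1, t.2.2)
  else
    if r t.2.2 t.2.1 then (t.2.2, t.2.1, t.1)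
    else if r t.2.2 t.1 then (t.2.1, t.2.2, t.1) else (t.2.1, t.1, t.2.2)

lemma perm_cnt (a b c d e f : P)
    (h : ({a,b,c} : Multiset P) = {d,e,f} ∨
      ((a = d ∧ b = e ∧ c = f) ∨ (a = d ∧ b = f ∧ c = e) ∨
       (a = e ∧ b = d ∧ c = f) ∨ (a = e ∧ b = f ∧ c = d) ∨
       (a = f ∧ b = d ∧ c = e) ∨ (a = f ∧ b = e ∧ c = d))) :
    ({a,b,c} : Multiset P) = {d,e,f} := by
  rcases h with h | h
  · exact h
  · rcases h with ⟨rfl,rfl,rfl⟩|⟨rfl,rfl,rfl⟩|⟨rfl,rfl,rfl⟩|⟨rfl,rfl,rfl⟩|⟨rfl,rfl,rfl⟩|⟨rfl,rfl,rfl⟩ <;>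
    · ext g
      simp only [Multiset.insert_eq_cons, Multiset.count_cons, Multiset.count_singleton]
      all_goals split_ifs <;> omega

lemma perm_of (a b c d e f : P)
    (h : (a = d ∧ b = e ∧ c = f) ∨ (a = d ∧ b = f ∧ c = e) ∨
       (a = e ∧ b = d ∧ c = f) ∨ (a = e ∧ b = f ∧ c = d) ∨
       (a = f ∧ b = d ∧ c = e) ∨ (a = f ∧ b = e ∧ c = d)) :
    ({a,b,c} : Multiset P) = {d,e,f} := perm_cnt a b c d e f (Or.inr h)

lemma sort3_mult (t : T3) : mult (sort3 t) = mult t := by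
  obtain ⟨a, b, c⟩ := t
  rw [sort3]
  split_ifs <;> simp only [mult] <;> exact perm_of _ _ _ _ _ _ (by simp)

lemma sort3_sorted (t : T3) : srt (sort3 t) := by
  obtain ⟨⟨a1,a2⟩, ⟨b1,b2⟩, ⟨c1,c2⟩⟩ := t
  rw [sort3]
  split_ifs <;> simp_all [srt, r] <;> omega

lemma pair_eq_iff (y z b c : P) : ({y, z} : Multiset P) = {b, c} ↔
    (y = b ∧ z = c) ∨ (y = c ∧ z = b) := by
  constructor
  · intro h
    simp only [Multiset.insert_eq_cons] at h
    rcases Multiset.cons_eq_cons.1 h with ⟨h1, h2⟩ | ⟨h1, cs, h2, h3⟩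
    · left; exact ⟨h1, by simpa using h2⟩
    · rcases (Multiset.singleton_eq_cons_iff _).1 h2 with ⟨h4, h5⟩
      rcases (Multiset.singleton_eq_cons_iff _).1 h3 with ⟨h6, h7⟩
      right; exact ⟨h6.symm, h4⟩
  · rintro (⟨rfl, rfl⟩ | ⟨rfl, rfl⟩)
    · rfl
    · simp only [Multiset.insert_eq_cons]; exact Multiset.cons_swap _ _ _

lemma mult_eq_iff (x y z a b c : P) : ({x, y, z} : Multiset P) = {a, b, c} ↔
    (x = a ∧ y = b ∧ z = c) ∨ (x = a ∧ y = c ∧ z = b) ∨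
    (x = b ∧ y = a ∧ z = c) ∨ (x = b ∧ y = c ∧ z = a) ∨
    (x = c ∧ y = a ∧ z = b) ∨ (x = c ∧ y = b ∧ z = a) := by
  constructor
  · intro h
    have hx : x ∈ ({a, b, c} : Multiset P) := by rw [← h]; simp
    simp only [Multiset.insert_eq_cons, Multiset.mem_cons, Multiset.mem_singleton] at hx
    rcases hx with hx | hx | hx
    · have h2 : ({y, z} : Multiset P) = {b, c} := by
        rw [hx] at h; simp only [Multiset.insert_eq_cons] at h
        rwa [Multiset.cons_inj_right] at h
      rcases (pair_eq_iff y z b c).1 h2 with ⟨h3, h4⟩ | ⟨h3, h4⟩ <;> tauto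
    · have h2 : ({y, z} : Multiset P) = {a, c} := by
        rw [hx] at h
        rw [show ({a, b, c} : Multiset P) = {b, a, c} from perm_of _ _ _ _ _ _ (by tauto)] at h
        simp only [Multiset.insert_eq_cons] at h
        rwa [Multiset.cons_inj_right] at h
      rcases (pair_eq_iff y z a c).1 h2 with ⟨h3, h4⟩ | ⟨h3, h4⟩ <;> tauto
    · have h2 : ({y, z} : Multiset P) = {a, b} := by
        rw [hx] at h
        rw [show ({a, b, c} : Multiset P) = {c, a, b} from perm_of _ _ _ _ _ _ (by tauto)] at h
        simp only [Multiset.insert_eq_cons] at h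
        rwa [Multiset.cons_inj_right] at h
      rcases (pair_eq_iff y z a b).1 h2 with ⟨h3, h4⟩ | ⟨h3, h4⟩ <;> tauto
  · intro h; exact perm_of _ _ _ _ _ _ h

lemma sorted_unique {t s : T3} (ht : srt t) (hs : srt s) (h : mult t = mult s) : t = s := by
  obtain ⟨⟨a1,a2⟩, ⟨b1,b2⟩, ⟨c1,c2⟩⟩ := t
  obtain ⟨⟨d1,d2⟩, ⟨e1,e2⟩, ⟨f1,f2⟩⟩ := s
  simp only [mult] at h
  rcases (mult_eq_iff _ _ _ _ _ _).1 h with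
    (⟨h1,h2,h3⟩|⟨h1,h2,h3⟩|⟨h1,h2,h3⟩|⟨h1,h2,h3⟩|⟨h1,h2,h3⟩|⟨h1,h2,h3⟩) <;>
    simp_all [srt, r, Prod.ext_iff] <;> omega

end VP3

namespace VP3

def box (k l : ℕ) : Finset P := Finset.range (k+1) ×ˢ Finset.range (l+1)

def OrdT (k l : ℕ) : Finset T3 := ((box k l) ×ˢ (box k l) ×ˢ (box k l)).filter
  (fun t => t.1 + t.2.1 + t.2.2 = (k,l) ∧ t.1 ≠ 0 ∧ t.2.1 ≠ 0 ∧ t.2.2 ≠ 0)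

instance : DecidablePred srt := fun t => by unfold srt; infer_instance

def SortT (k l : ℕ) : Finset T3 := (OrdT k l).filter srt

lemma mem_OrdT {k l : ℕ} {t : T3} : t ∈ OrdT k l ↔
    (t.1 + t.2.1 + t.2.2 = (k,l) ∧ t.1 ≠ 0 ∧ t.2.1 ≠ 0 ∧ t.2.2 ≠ 0) := by
  obtain ⟨⟨a1,a2⟩,⟨b1,b2⟩,⟨c1,c2⟩⟩ := t
  simp [OrdT, box, Finset.mem_product, Prod.ext_iff, Finset.mem_range]
  omega

lemma mult_sum (t : T3) : (mult t).sum = t.1 + t.2.1 + t.2.2 := by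
  simp [mult]; rw [add_assoc]

lemma srt_trans {x y z : P} (h1 : r x y) (h2 : r y z) : r x z := by
  obtain ⟨a,b⟩ := x; obtain ⟨c,d⟩ := y; obtain ⟨e,f⟩ := z
  simp only [r] at *; omega

end VP3

/-- `p_m(k,l)`: the number of vector partitions of `(k,l) ∈ ℤ_{≥0}²` into exactly `m`
nonzero parts. -/
noncomputable def vectorPartitions2 (m k l : ℕ) : ℕ :=
  Nat.card {M : Multiset (ℕ × ℕ) //
    Multiset.card M = m ∧ (∀ x ∈ M, x ≠ 0) ∧ M.sum = (k, l)}

namespace VP3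

lemma p3_eq (k l : ℕ) : vectorPartitions2 3 k l = (SortT k l).card := by
  classical
  have hbij : Function.Bijective
      (fun t : {x // x ∈ SortT k l} =>
        (⟨mult t.1, by
          obtain ⟨t, ht⟩ := t
          simp only [SortT, Finset.mem_filter] at ht
          obtain ⟨hord, hsrt⟩ := ht
          rw [mem_OrdT] at hord
          refine ⟨by simp [mult], ?_, ?_⟩
          · intro x hx
            simp only [mult, Multiset.insert_eq_cons, Multiset.mem_cons,
              Multiset.mem_singleton] at hx
            rcases hx with rfl | rfl | rfl <;> tauto
          · rw [mult_sum]; exact hord.1⟩ :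
          {M : Multiset (ℕ × ℕ) // Multiset.card M = 3 ∧ (∀ x ∈ M, x ≠ 0) ∧ M.sum = (k, l)})) := by
    constructor
    · rintro ⟨t, ht⟩ ⟨s, hs⟩ h
      simp only [Subtype.mk.injEq] at h ⊢
      simp only [SortT, Finset.mem_filter] at ht hs
      exact sorted_unique ht.2 hs.2 h
    · rintro ⟨M, h3, hnz, hsum⟩
      obtain ⟨x, y, z, rfl⟩ := Multiset.card_eq_three.1 h3
      have hm : mult (sort3 (x, y, z)) = {x, y, z} := sort3_mult _
      have hs3 : srt (sort3 (x, y, z)) := sort3_sorted _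
      have hmem : sort3 (x, y, z) ∈ SortT k l := by
        simp only [SortT, Finset.mem_filter]
        refine ⟨?_, hs3⟩
        rw [mem_OrdT]
        have h1 : (sort3 (x,y,z)).1 ∈ mult (sort3 (x,y,z)) := by simp [mult]
        have h2 : (sort3 (x,y,z)).2.1 ∈ mult (sort3 (x,y,z)) := by simp [mult]
        have h3' : (sort3 (x,y,z)).2.2 ∈ mult (sort3 (x,y,z)) := by simp [mult]
        rw [hm] at h1 h2 h3'
        refine ⟨?_, hnz _ h1, hnz _ h2, hnz _ h3'⟩
        rw [← mult_sum, hm, hsum]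
      exact ⟨⟨_, hmem⟩, by simp only [Subtype.mk.injEq]; exact hm⟩
  rw [vectorPartitions2, ← Nat.card_eq_finsetCard]
  exact (Nat.card_congr (Equiv.ofBijective _ hbij)).symm

end VP3


namespace VP3

lemma ordt_of_mult {k l : ℕ} {t s : T3} (h : mult t = mult s) (hs : s ∈ OrdT k l) :
    t ∈ OrdT k l := by
  rw [mem_OrdT] at hs ⊢
  obtain ⟨hsum, h1, h2, h3⟩ := hs
  have m1 : t.1 ∈ mult s := h ▸ (by simp [mult] : t.1 ∈ mult t)
  have m2 : t.2.1 ∈ mult s := h ▸ (by simp [mult] : t.2.1 ∈ mult t)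
  have m3 : t.2.2 ∈ mult s := h ▸ (by simp [mult] : t.2.2 ∈ mult t)
  simp only [mult, Multiset.insert_eq_cons, Multiset.mem_cons, Multiset.mem_singleton] at m1 m2 m3
  refine ⟨?_, ?_, ?_, ?_⟩
  · rw [← mult_sum, h, mult_sum]; exact hsum
  · rcases m1 with e|e|e <;> rw [e] <;> assumption
  · rcases m2 with e|e|e <;> rw [e] <;> assumption
  · rcases m3 with e|e|e <;> rw [e] <;> assumption

lemma fiber_char {k l : ℕ} {s : T3} (hs : s ∈ SortT k l) (t : T3) :
    (t ∈ OrdT k l ∧ sort3 t = s) ↔ mult t = mult s := by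
  constructor
  · rintro ⟨ht, rfl⟩
    exact (sort3_mult t).symm
  · intro h
    have hsO : s ∈ OrdT k l := (Finset.mem_filter.1 hs).1
    refine ⟨ordt_of_mult h hsO, sorted_unique (sort3_sorted t) ((Finset.mem_filter.1 hs).2) ?_⟩
    rw [sort3_mult]; exact h

lemma card3 {α : Type*} [DecidableEq α] {x y z : α} (h1 : x ≠ y) (h2 : x ≠ z) (h3 : y ≠ z) :
    ({x, y, z} : Finset α).card = 3 := by
  rw [Finset.card_insert_of_notMem (by simp [h1, h2]),
    Finset.card_insert_of_notMem (by simp [h3]), Finset.card_singleton]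

lemma card6 {α : Type*} [DecidableEq α] {x1 x2 x3 x4 x5 x6 : α}
    (h12 : x1 ≠ x2) (h13 : x1 ≠ x3) (h14 : x1 ≠ x4) (h15 : x1 ≠ x5) (h16 : x1 ≠ x6)
    (h23 : x2 ≠ x3) (h24 : x2 ≠ x4) (h25 : x2 ≠ x5) (h26 : x2 ≠ x6)
    (h34 : x3 ≠ x4) (h35 : x3 ≠ x5) (h36 : x3 ≠ x6)
    (h45 : x4 ≠ x5) (h46 : x4 ≠ x6) (h56 : x5 ≠ x6) :
    ({x1, x2, x3, x4, x5, x6} : Finset α).card = 6 := by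
  rw [Finset.card_insert_of_notMem (by simp [h12, h13, h14, h15, h16]),
    Finset.card_insert_of_notMem (by simp [h23, h24, h25, h26]),
    Finset.card_insert_of_notMem (by simp [h34, h35, h36]),
    Finset.card_insert_of_notMem (by simp [h45, h46]),
    Finset.card_insert_of_notMem (by simp [h56]), Finset.card_singleton]

lemma keyN {k l : ℕ} {s : T3} (hs : s ∈ SortT k l) (t : T3) :
    t ∈ (OrdT k l).filter (fun t => sort3 t = s) ↔ mult t = mult s := by
  rw [Finset.mem_filter]; exact fiber_char hs t

lemma keyM {k l : ℕ} {s : T3} (hs : s ∈ SortT k l) (t : T3) :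
    t ∈ ((OrdT k l).filter (fun t => t.1 = t.2.1)).filter
      (fun t => sort3 t = s) ↔ (mult t = mult s ∧ t.1 = t.2.1) := by
  rw [Finset.mem_filter, Finset.mem_filter]
  constructor
  · rintro ⟨⟨h1, h2⟩, h3⟩; exact ⟨(fiber_char hs t).1 ⟨h1, h3⟩, h2⟩
  · rintro ⟨h1, h2⟩
    obtain ⟨h3, h4⟩ := (fiber_char hs t).2 h1
    exact ⟨⟨h3, h2⟩, h4⟩

lemma keyT {k l : ℕ} {s : T3} (hs : s ∈ SortT k l) (t : T3) :
    t ∈ ((OrdT k l).filter (fun t => t.1 = t.2.1 ∧ t.2.1 = t.2.2)).filter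
      (fun t => sort3 t = s) ↔ (mult t = mult s ∧ t.1 = t.2.1 ∧ t.2.1 = t.2.2) := by
  rw [Finset.mem_filter, Finset.mem_filter]
  constructor
  · rintro ⟨⟨h1, h2⟩, h3⟩; exact ⟨(fiber_char hs t).1 ⟨h1, h3⟩, h2⟩
  · rintro ⟨h1, h2⟩
    obtain ⟨h3, h4⟩ := (fiber_char hs t).2 h1
    exact ⟨⟨h3, h2⟩, h4⟩

lemma pointwise {k l : ℕ} {s : T3} (hs : s ∈ SortT k l) :
    ((OrdT k l).filter (fun t => sort3 t = s)).card
    + 3 * (((OrdT k l).filter (fun t => t.1 = t.2.1)).filter (fun t => sort3 t = s)).card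
    + 2 * (((OrdT k l).filter (fun t => t.1 = t.2.1 ∧ t.2.1 = t.2.2)).filter
        (fun t => sort3 t = s)).card = 6 := by
  classical
  obtain ⟨hsO, hr1, hr2⟩ : s ∈ OrdT k l ∧ r s.1 s.2.1 ∧ r s.2.1 s.2.2 := by
    have := Finset.mem_filter.1 hs; exact ⟨this.1, this.2.1, this.2.2⟩
  obtain ⟨a, b, c⟩ := s
  simp only at hr1 hr2
  by_cases hab : a = b <;> by_cases hbc : b = c
  · -- all equal
    subst hab; subst hbc
    have eN : (OrdT k l).filter (fun t => sort3 t = (a,a,a)) = {(a,a,a)} := by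
      ext ⟨x, y, z⟩
      rw [keyN hs _, Finset.mem_singleton]
      simp only [mult, mult_eq_iff, Prod.mk.injEq]
      constructor
      · rintro (⟨rfl,rfl,rfl⟩|⟨rfl,rfl,rfl⟩|⟨rfl,rfl,rfl⟩|⟨rfl,rfl,rfl⟩|⟨rfl,rfl,rfl⟩|⟨rfl,rfl,rfl⟩) <;>
          simp_all
      · rintro ⟨rfl, rfl, rfl⟩; simp
    have eM : ((OrdT k l).filter (fun t => t.1 = t.2.1)).filter (fun t => sort3 t = (a,a,a))
        = {(a,a,a)} := by
      ext ⟨x, y, z⟩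
      rw [keyM hs _, Finset.mem_singleton]
      simp only [mult, mult_eq_iff, Prod.mk.injEq]
      constructor
      · rintro ⟨(⟨rfl,rfl,rfl⟩|⟨rfl,rfl,rfl⟩|⟨rfl,rfl,rfl⟩|⟨rfl,rfl,rfl⟩|⟨rfl,rfl,rfl⟩|⟨rfl,rfl,rfl⟩), h2⟩ <;>
          simp_all
      · rintro ⟨rfl, rfl, rfl⟩; simp
    have eT : ((OrdT k l).filter (fun t => t.1 = t.2.1 ∧ t.2.1 = t.2.2)).filter
        (fun t => sort3 t = (a,a,a)) = {(a,a,a)} := by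
      ext ⟨x, y, z⟩
      rw [keyT hs _, Finset.mem_singleton]
      simp only [mult, mult_eq_iff, Prod.mk.injEq]
      constructor
      · rintro ⟨(⟨rfl,rfl,rfl⟩|⟨rfl,rfl,rfl⟩|⟨rfl,rfl,rfl⟩|⟨rfl,rfl,rfl⟩|⟨rfl,rfl,rfl⟩|⟨rfl,rfl,rfl⟩), h2⟩ <;>
          simp_all
      · rintro ⟨rfl, rfl, rfl⟩; simp
    rw [eN, eM, eT]; simp
  · -- a = b ≠ c
    subst hab
    have hac : a ≠ c := hbc
    have hac' : c ≠ a := Ne.symm hac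
    have eN : (OrdT k l).filter (fun t => sort3 t = (a,a,c)) = {(a,a,c),(a,c,a),(c,a,a)} := by
      ext ⟨x, y, z⟩
      rw [keyN hs _]
      simp only [mult, mult_eq_iff, Finset.mem_insert, Finset.mem_singleton, Prod.mk.injEq]
      constructor
      · rintro (⟨rfl,rfl,rfl⟩|⟨rfl,rfl,rfl⟩|⟨rfl,rfl,rfl⟩|⟨rfl,rfl,rfl⟩|⟨rfl,rfl,rfl⟩|⟨rfl,rfl,rfl⟩) <;>
          simp_all
      · rintro (⟨rfl,rfl,rfl⟩|⟨rfl,rfl,rfl⟩|⟨rfl,rfl,rfl⟩) <;> simp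
    have eM : ((OrdT k l).filter (fun t => t.1 = t.2.1)).filter (fun t => sort3 t = (a,a,c))
        = {(a,a,c)} := by
      ext ⟨x, y, z⟩
      rw [keyM hs _, Finset.mem_singleton]
      simp only [mult, mult_eq_iff, Prod.mk.injEq]
      constructor
      · rintro ⟨(⟨rfl,rfl,rfl⟩|⟨rfl,rfl,rfl⟩|⟨rfl,rfl,rfl⟩|⟨rfl,rfl,rfl⟩|⟨rfl,rfl,rfl⟩|⟨rfl,rfl,rfl⟩), h2⟩ <;>
          simp_all
      · rintro ⟨rfl, rfl, rfl⟩; simp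
    have eT : ((OrdT k l).filter (fun t => t.1 = t.2.1 ∧ t.2.1 = t.2.2)).filter
        (fun t => sort3 t = (a,a,c)) = ∅ := by
      ext ⟨x, y, z⟩
      rw [keyT hs _]
      simp only [mult, mult_eq_iff, Prod.mk.injEq, Finset.notMem_empty, iff_false, not_and]
      rintro (⟨rfl,rfl,rfl⟩|⟨rfl,rfl,rfl⟩|⟨rfl,rfl,rfl⟩|⟨rfl,rfl,rfl⟩|⟨rfl,rfl,rfl⟩|⟨rfl,rfl,rfl⟩) <;>
        simp_all
    rw [eN, eM, eT]
    rw [card3 (by simp [Prod.mk.injEq, hac, (Ne.symm hac)]) (by simp [Prod.mk.injEq, hac, (Ne.symm hac)])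
      (by simp [Prod.mk.injEq, hac, (Ne.symm hac)])]
    simp
  · -- a ≠ b = c
    subst hbc
    have hab' : b ≠ a := Ne.symm hab
    have eN : (OrdT k l).filter (fun t => sort3 t = (a,b,b)) = {(a,b,b),(b,a,b),(b,b,a)} := by
      ext ⟨x, y, z⟩
      rw [keyN hs _]
      simp only [mult, mult_eq_iff, Finset.mem_insert, Finset.mem_singleton, Prod.mk.injEq]
      constructor
      · rintro (⟨rfl,rfl,rfl⟩|⟨rfl,rfl,rfl⟩|⟨rfl,rfl,rfl⟩|⟨rfl,rfl,rfl⟩|⟨rfl,rfl,rfl⟩|⟨rfl,rfl,rfl⟩) <;>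
          simp_all
      · rintro (⟨rfl,rfl,rfl⟩|⟨rfl,rfl,rfl⟩|⟨rfl,rfl,rfl⟩) <;> simp
    have eM : ((OrdT k l).filter (fun t => t.1 = t.2.1)).filter (fun t => sort3 t = (a,b,b))
        = {(b,b,a)} := by
      ext ⟨x, y, z⟩
      rw [keyM hs _, Finset.mem_singleton]
      simp only [mult, mult_eq_iff, Prod.mk.injEq]
      constructor
      · rintro ⟨(⟨rfl,rfl,rfl⟩|⟨rfl,rfl,rfl⟩|⟨rfl,rfl,rfl⟩|⟨rfl,rfl,rfl⟩|⟨rfl,rfl,rfl⟩|⟨rfl,rfl,rfl⟩), h2⟩ <;>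
          simp_all
      · rintro ⟨rfl, rfl, rfl⟩; simp
    have eT : ((OrdT k l).filter (fun t => t.1 = t.2.1 ∧ t.2.1 = t.2.2)).filter
        (fun t => sort3 t = (a,b,b)) = ∅ := by
      ext ⟨x, y, z⟩
      rw [keyT hs _]
      simp only [mult, mult_eq_iff, Prod.mk.injEq, Finset.notMem_empty, iff_false, not_and]
      rintro (⟨rfl,rfl,rfl⟩|⟨rfl,rfl,rfl⟩|⟨rfl,rfl,rfl⟩|⟨rfl,rfl,rfl⟩|⟨rfl,rfl,rfl⟩|⟨rfl,rfl,rfl⟩) <;>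
        simp_all
    rw [eN, eM, eT]
    rw [card3 (by simp [Prod.mk.injEq, hab, (Ne.symm hab)]) (by simp [Prod.mk.injEq, hab, (Ne.symm hab)])
      (by simp [Prod.mk.injEq, hab, (Ne.symm hab)])]
    simp
  · -- all distinct
    have hac : a ≠ c := by
      rintro rfl
      exact hab (r_antisymm hr1 hr2)
    have hab' : b ≠ a := Ne.symm hab
    have hbc' : c ≠ b := Ne.symm hbc
    have hac' : c ≠ a := Ne.symm hac
    have eN : (OrdT k l).filter (fun t => sort3 t = (a,b,c)) =
        {(a,b,c),(a,c,b),(b,a,c),(b,c,a),(c,a,b),(c,b,a)} := by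
      ext ⟨x, y, z⟩
      rw [keyN hs _]
      simp only [mult, mult_eq_iff, Finset.mem_insert, Finset.mem_singleton, Prod.mk.injEq]
    have eM : ((OrdT k l).filter (fun t => t.1 = t.2.1)).filter (fun t => sort3 t = (a,b,c))
        = ∅ := by
      ext ⟨x, y, z⟩
      rw [keyM hs _]
      simp only [mult, mult_eq_iff, Prod.mk.injEq, Finset.notMem_empty, iff_false, not_and]
      rintro (⟨rfl,rfl,rfl⟩|⟨rfl,rfl,rfl⟩|⟨rfl,rfl,rfl⟩|⟨rfl,rfl,rfl⟩|⟨rfl,rfl,rfl⟩|⟨rfl,rfl,rfl⟩) <;>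
        simp_all
    have eT : ((OrdT k l).filter (fun t => t.1 = t.2.1 ∧ t.2.1 = t.2.2)).filter
        (fun t => sort3 t = (a,b,c)) = ∅ := by
      ext ⟨x, y, z⟩
      rw [keyT hs _]
      simp only [mult, mult_eq_iff, Prod.mk.injEq, Finset.notMem_empty, iff_false, not_and]
      rintro (⟨rfl,rfl,rfl⟩|⟨rfl,rfl,rfl⟩|⟨rfl,rfl,rfl⟩|⟨rfl,rfl,rfl⟩|⟨rfl,rfl,rfl⟩|⟨rfl,rfl,rfl⟩) <;>
        simp_all
    rw [eN, eM, eT]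
    rw [card6 (by simp [Prod.mk.injEq, hab, hbc, hac, (Ne.symm hab), (Ne.symm hbc), (Ne.symm hac)])
      (by simp [Prod.mk.injEq, hab, hbc, hac, (Ne.symm hab), (Ne.symm hbc), (Ne.symm hac)])
      (by simp [Prod.mk.injEq, hab, hbc, hac, (Ne.symm hab), (Ne.symm hbc), (Ne.symm hac)])
      (by simp [Prod.mk.injEq, hab, hbc, hac, (Ne.symm hab), (Ne.symm hbc), (Ne.symm hac)])
      (by simp [Prod.mk.injEq, hab, hbc, hac, (Ne.symm hab), (Ne.symm hbc), (Ne.symm hac)])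
      (by simp [Prod.mk.injEq, hab, hbc, hac, (Ne.symm hab), (Ne.symm hbc), (Ne.symm hac)])
      (by simp [Prod.mk.injEq, hab, hbc, hac, (Ne.symm hab), (Ne.symm hbc), (Ne.symm hac)])
      (by simp [Prod.mk.injEq, hab, hbc, hac, (Ne.symm hab), (Ne.symm hbc), (Ne.symm hac)])
      (by simp [Prod.mk.injEq, hab, hbc, hac, (Ne.symm hab), (Ne.symm hbc), (Ne.symm hac)])
      (by simp [Prod.mk.injEq, hab, hbc, hac, (Ne.symm hab), (Ne.symm hbc), (Ne.symm hac)])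
      (by simp [Prod.mk.injEq, hab, hbc, hac, (Ne.symm hab), (Ne.symm hbc), (Ne.symm hac)])
      (by simp [Prod.mk.injEq, hab, hbc, hac, (Ne.symm hab), (Ne.symm hbc), (Ne.symm hac)])
      (by simp [Prod.mk.injEq, hab, hbc, hac, (Ne.symm hab), (Ne.symm hbc), (Ne.symm hac)])
      (by simp [Prod.mk.injEq, hab, hbc, hac, (Ne.symm hab), (Ne.symm hbc), (Ne.symm hac)])
      (by simp [Prod.mk.injEq, hab, hbc, hac, (Ne.symm hab), (Ne.symm hbc), (Ne.symm hac)])]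
    simp

lemma burnside (k l : ℕ) :
    (OrdT k l).card + 3 * ((OrdT k l).filter (fun t => t.1 = t.2.1)).card
      + 2 * ((OrdT k l).filter (fun t => t.1 = t.2.1 ∧ t.2.1 = t.2.2)).card
      = 6 * (SortT k l).card := by
  classical
  have hmap : ∀ t ∈ OrdT k l, sort3 t ∈ SortT k l := by
    intro t ht
    rw [SortT, Finset.mem_filter]
    exact ⟨ordt_of_mult (sort3_mult t) ht, sort3_sorted t⟩
  rw [Finset.card_eq_sum_card_fiberwise hmap,
    Finset.card_eq_sum_card_fiberwise
      (fun t ht => hmap t (Finset.mem_filter.1 ht).1 : ∀ t ∈ (OrdT k l).filter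
        (fun t => t.1 = t.2.1), sort3 t ∈ SortT k l),
    Finset.card_eq_sum_card_fiberwise
      (fun t ht => hmap t (Finset.mem_filter.1 ht).1 : ∀ t ∈ (OrdT k l).filter
        (fun t => t.1 = t.2.1 ∧ t.2.1 = t.2.2), sort3 t ∈ SortT k l),
    Finset.mul_sum, Finset.mul_sum, ← Finset.sum_add_distrib, ← Finset.sum_add_distrib]
  rw [show 6 * (SortT k l).card = ∑ _s ∈ SortT k l, 6 by
    rw [Finset.sum_const, smul_eq_mul, mul_comm]]
  exact Finset.sum_congr rfl (fun s hs => pointwise hs)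

end VP3

namespace VP3

def PairsF (w : P) : Finset (P × P) :=
  ((box w.1 w.2) ×ˢ (box w.1 w.2)).filter (fun p => p.1 + p.2 = w ∧ p.1 ≠ 0 ∧ p.2 ≠ 0)

lemma mem_PairsF {w : P} {p : P × P} : p ∈ PairsF w ↔ p.1 + p.2 = w ∧ p.1 ≠ 0 ∧ p.2 ≠ 0 := by
  obtain ⟨⟨a1,a2⟩,⟨b1,b2⟩⟩ := p
  obtain ⟨w1, w2⟩ := w
  simp [PairsF, box, Finset.mem_product, Prod.ext_iff, Finset.mem_range]
  omega

lemma box_filter_card (w : P) (hw : w ≠ 0) :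
    ((box w.1 w.2).filter (fun x => x ≠ 0 ∧ x ≠ w)).card + 2 = (w.1+1)*(w.2+1) := by
  classical
  have he : (box w.1 w.2).filter (fun x => x ≠ 0 ∧ x ≠ w) = (box w.1 w.2) \ {(0,0), w} := by
    ext x
    simp only [Finset.mem_filter, Finset.mem_sdiff, Finset.mem_insert, Finset.mem_singleton]
    constructor
    · rintro ⟨h1, h2, h3⟩
      exact ⟨h1, by rintro (rfl | rfl) <;> simp_all [Prod.ext_iff]⟩
    · rintro ⟨h1, h2⟩
      refine ⟨h1, ?_, ?_⟩ <;> intro h <;> apply h2 <;> simp [h, Prod.mk_zero_zero]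
  have hsub : ({(0,0), w} : Finset P) ⊆ box w.1 w.2 := by
    intro x hx
    simp only [Finset.mem_insert, Finset.mem_singleton] at hx
    rcases hx with rfl | rfl <;> simp [box, Finset.mem_product]
  have hcard2 : ({(0,0), w} : Finset P).card = 2 := by
    rw [Finset.card_insert_of_notMem (by simpa [Prod.mk_zero_zero] using (Ne.symm hw)), Finset.card_singleton]
  rw [he, Finset.card_sdiff_of_subset hsub, hcard2]
  have hbox : (box w.1 w.2).card = (w.1+1)*(w.2+1) := by
    simp [box, Finset.card_range]
  rw [hbox]
  have : 2 ≤ (w.1+1)*(w.2+1) := by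
    rcases w with ⟨w1, w2⟩
    simp only [Ne, Prod.mk_eq_zero, not_and] at hw
    rcases Nat.eq_zero_or_pos w1 with h1 | h1
    · subst h1
      have := hw rfl
      have : 1 ≤ w2 := by omega
      nlinarith
    · nlinarith
  omega

lemma pairsF_card (w : P) (hw : w ≠ 0) : (PairsF w).card + 2 = (w.1+1)*(w.2+1) := by
  classical
  have hbij : (PairsF w).card = ((box w.1 w.2).filter (fun x => x ≠ 0 ∧ x ≠ w)).card := by
    apply Finset.card_bij (fun p _ => p.1)
    · intro p hp
      rw [mem_PairsF] at hp
      obtain ⟨hsum, h1, h2⟩ := hp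
      simp only [Finset.mem_filter]
      refine ⟨?_, h1, ?_⟩
      · obtain ⟨⟨a1,a2⟩,⟨b1,b2⟩⟩ := p
        obtain ⟨w1,w2⟩ := w
        simp only [Prod.mk.injEq, Prod.mk_add_mk] at hsum
        simp [box, Finset.mem_range]
        omega
      · intro h
        apply h2
        obtain ⟨⟨a1,a2⟩,⟨b1,b2⟩⟩ := p
        obtain ⟨w1,w2⟩ := w
        simp only [Prod.mk.injEq, Prod.mk_add_mk, Prod.mk_eq_zero, Prod.fst_zero,
          Prod.snd_zero] at hsum h ⊢
        omega
    · intro p hp q hq h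
      rw [mem_PairsF] at hp hq
      obtain ⟨⟨a1,a2⟩,⟨b1,b2⟩⟩ := p
      obtain ⟨⟨c1,c2⟩,⟨d1,d2⟩⟩ := q
      obtain ⟨w1,w2⟩ := w
      simp only [Ne, Prod.mk.injEq, Prod.mk_add_mk, Prod.mk_eq_zero, not_and,
        Prod.fst_zero, Prod.snd_zero] at *
      omega
    · intro x hx
      simp only [Finset.mem_filter] at hx
      obtain ⟨hbox, h0, hxw⟩ := hx
      obtain ⟨x1, x2⟩ := x
      obtain ⟨w1, w2⟩ := w
      simp only [box, Finset.mem_product, Finset.mem_range] at hbox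
      refine ⟨((x1,x2),(w1-x1,w2-x2)), ?_, rfl⟩
      rw [mem_PairsF]
      simp only [Ne, Prod.mk.injEq, Prod.mk_add_mk, Prod.mk_eq_zero, not_and,
        Prod.fst_zero, Prod.snd_zero] at *
      omega
  rw [hbij]
  exact box_filter_card w hw

lemma gauss (n : ℕ) : 2 * ∑ i ∈ Finset.range (n+1), (n+1-i) = (n+1)*(n+2) := by
  induction n with
  | zero => simp
  | succ m ih =>
    rw [Finset.sum_range_succ]
    have h1 : ∀ i ∈ Finset.range (m+1), m+1+1-i = (m+1-i)+1 := by
      intro i hi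
      simp only [Finset.mem_range] at hi
      omega
    rw [Finset.sum_congr rfl h1, Finset.sum_add_distrib, Finset.sum_const,
      Finset.card_range, smul_eq_mul, mul_one]
    have expand : (m+1+1)*(m+1+2) = (m+1)*(m+2) + 2*m + 4 := by ring
    have ht : m+1+1-(m+1) = 1 := by omega
    rw [ht]
    linarith

end VP3

namespace VP3

lemma ordT_card (k l : ℕ) (h0 : ¬(k = 0 ∧ l = 0)) :
    4 * (OrdT k l).card + 12 * ((k+1)*(l+1)) = (k+1)*(k+2)*((l+1)*(l+2)) + 12 := by
  classical
  set D := (box k l).filter (fun x => x ≠ 0 ∧ x ≠ (k,l)) with hD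
  have hw0 : ((k,l) : P) ≠ 0 := by
    simp only [Ne, Prod.mk_eq_zero, not_and]
    intro h1 h2
    exact h0 ⟨h1, h2⟩
  -- fiber cards
  have hfib : ∀ x ∈ D, ((OrdT k l).filter (fun t => t.1 = x)).card + 2
      = (k+1-x.1)*(l+1-x.2) := by
    intro x hx
    simp only [hD, Finset.mem_filter] at hx
    obtain ⟨hxbox, hx0, hxkl⟩ := hx
    obtain ⟨x1, x2⟩ := x
    simp only [box, Finset.mem_product, Finset.mem_range] at hxbox
    have hxw : ¬(k - x1 = 0 ∧ l - x2 = 0) := by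
      simp only [Ne, Prod.mk.injEq, not_and] at hxkl
      omega
    have hbij : ((OrdT k l).filter (fun t => t.1 = (x1,x2))).card
        = (PairsF (k - x1, l - x2)).card := by
      apply Finset.card_bij (fun t _ => (t.2.1, t.2.2))
      · intro t ht
        simp only [Finset.mem_filter, mem_OrdT] at ht
        obtain ⟨⟨hsum, h1, h2, h3⟩, hfst⟩ := ht
        rw [mem_PairsF]
        obtain ⟨⟨a1,a2⟩,⟨b1,b2⟩,⟨c1,c2⟩⟩ := t
        simp only [Prod.mk.injEq, Prod.mk_add_mk, Prod.mk_eq_zero, Ne, not_and,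
          Prod.fst_zero, Prod.snd_zero] at *
        omega
      · intro t ht u hu h
        simp only [Finset.mem_filter, mem_OrdT] at ht hu
        obtain ⟨⟨a1,a2⟩,⟨b1,b2⟩,⟨c1,c2⟩⟩ := t
        obtain ⟨⟨a1',a2'⟩,⟨b1',b2'⟩,⟨c1',c2'⟩⟩ := u
        simp only [Prod.mk.injEq, Prod.mk_add_mk, Prod.mk_eq_zero, Ne, not_and,
          Prod.fst_zero, Prod.snd_zero] at *
        omega
      · intro p hp
        rw [mem_PairsF] at hp
        obtain ⟨⟨b1,b2⟩,⟨c1,c2⟩⟩ := p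
        refine ⟨((x1,x2),(b1,b2),(c1,c2)), ?_, rfl⟩
        simp only [Finset.mem_filter, mem_OrdT]
        simp only [Prod.mk.injEq, Prod.mk_add_mk, Prod.mk_eq_zero, Ne, not_and,
          Prod.fst_zero, Prod.snd_zero] at *
        obtain ⟨⟨hp1, hp2⟩, hp3, hp4⟩ := hp
        obtain ⟨hb1, hb2⟩ := hxbox
        exact ⟨⟨⟨by omega, by omega⟩, hx0, hp3, hp4⟩, trivial⟩
    rw [hbij]
    have := pairsF_card (k - x1, l - x2) (by
      simp only [Ne, Prod.mk_eq_zero, not_and]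
      intro h1 h2
      exact hxw ⟨h1, h2⟩)
    simp only at this
    rw [this]
    simp only
    congr 1 <;> omega
  -- fiberwise decomposition
  have hmap : ∀ t ∈ OrdT k l, t.1 ∈ D := by
    intro t ht
    rw [mem_OrdT] at ht
    obtain ⟨hsum, h1, h2, h3⟩ := ht
    simp only [hD, Finset.mem_filter]
    obtain ⟨⟨a1,a2⟩,⟨b1,b2⟩,⟨c1,c2⟩⟩ := t
    simp only [Prod.mk.injEq, Prod.mk_add_mk, Prod.mk_eq_zero, Ne, not_and,
      Prod.fst_zero, Prod.snd_zero, box, Finset.mem_product, Finset.mem_range] at *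
    omega
  have hdec : (OrdT k l).card = ∑ x ∈ D, ((OrdT k l).filter (fun t => t.1 = x)).card :=
    Finset.card_eq_sum_card_fiberwise hmap
  have hsum2 : (OrdT k l).card + 2 * D.card = ∑ x ∈ D, (k+1-x.1)*(l+1-x.2) := by
    rw [hdec, ← Finset.sum_congr rfl hfib, Finset.sum_add_distrib, Finset.sum_const,
      smul_eq_mul, mul_comm]
  have hDbox : D = box k l \ {((0,0) : P), (k,l)} := by
    ext x
    simp only [hD, Finset.mem_filter, Finset.mem_sdiff, Finset.mem_insert, Finset.mem_singleton]
    constructor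
    · rintro ⟨h1, h2, h3⟩
      exact ⟨h1, by rintro (rfl | rfl) <;> simp_all [Prod.ext_iff]⟩
    · rintro ⟨h1, h2⟩
      refine ⟨h1, ?_, ?_⟩ <;> intro h <;> apply h2 <;> simp [h, Prod.mk_zero_zero]
  have hsub : ({((0,0) : P), (k,l)} : Finset P) ⊆ box k l := by
    intro x hx
    simp only [Finset.mem_insert, Finset.mem_singleton] at hx
    rcases hx with rfl | rfl <;> simp [box, Finset.mem_product]
  have hsdiff : (∑ x ∈ D, (k+1-x.1)*(l+1-x.2))
      + (∑ x ∈ ({((0,0) : P), (k,l)} : Finset P), (k+1-x.1)*(l+1-x.2))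
      = ∑ x ∈ box k l, (k+1-x.1)*(l+1-x.2) := by
    rw [hDbox]
    exact Finset.sum_sdiff hsub
  have hpairsum : (∑ x ∈ ({((0,0) : P), (k,l)} : Finset P), (k+1-x.1)*(l+1-x.2))
      = (k+1)*(l+1) + 1 := by
    rw [Finset.sum_pair (by simp only [Ne, Prod.mk.injEq, not_and]; intro h1 h2; omega)]
    have e1 : k+1-k = 1 := by omega
    have e2 : l+1-l = 1 := by omega
    simp only [e1, e2]
    simp
  have hboxsum : (∑ x ∈ box k l, (k+1-x.1)*(l+1-x.2))
      = (∑ i ∈ Finset.range (k+1), (k+1-i)) * (∑ j ∈ Finset.range (l+1), (l+1-j)) := by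
    rw [box, Finset.sum_product, Finset.sum_mul_sum]
  have hga := gauss k
  have hgb := gauss l
  have hDcard : D.card + 2 = (k+1)*(l+1) := by
    have := box_filter_card (k,l) hw0
    simpa using this
  have hprod : (k+1)*(k+2)*((l+1)*(l+2))
      = 4*((∑ i ∈ Finset.range (k+1), (k+1-i)) * (∑ j ∈ Finset.range (l+1), (l+1-j))) := by
    rw [← hga, ← hgb]
    ring
  rw [hprod]
  rw [hboxsum] at hsdiff
  linarith [hsum2, hsdiff, hpairsum, hDcard]

end VP3

namespace VP3

lemma mset_card_bij (k l : ℕ) :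
    ((OrdT k l).filter (fun t => t.1 = t.2.1)).card =
    ((box (k/2) (l/2)).filter (fun u => u ≠ 0 ∧ ¬(2*u.1 = k ∧ 2*u.2 = l))).card := by
  classical
  apply Finset.card_bij (fun t _ => t.1)
  · intro t ht
    simp only [Finset.mem_filter, mem_OrdT] at ht
    obtain ⟨⟨hsum, h1, h2, h3⟩, heq⟩ := ht
    obtain ⟨⟨a1,a2⟩,⟨b1,b2⟩,⟨c1,c2⟩⟩ := t
    simp only [Finset.mem_filter, box, Finset.mem_product, Finset.mem_range, Ne,
      Prod.mk.injEq, Prod.mk_add_mk, Prod.mk_eq_zero, not_and,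
      Prod.fst_zero, Prod.snd_zero] at *
    omega
  · intro t ht u hu h
    simp only [Finset.mem_filter, mem_OrdT] at ht hu
    obtain ⟨⟨a1,a2⟩,⟨b1,b2⟩,⟨c1,c2⟩⟩ := t
    obtain ⟨⟨a1',a2'⟩,⟨b1',b2'⟩,⟨c1',c2'⟩⟩ := u
    simp only [Prod.mk.injEq, Prod.mk_add_mk, Prod.mk_eq_zero, Ne, not_and,
      Prod.fst_zero, Prod.snd_zero] at *
    omega
  · intro u hu
    obtain ⟨u1, u2⟩ := u
    simp only [Finset.mem_filter, box, Finset.mem_product, Finset.mem_range, Ne,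
      Prod.mk_eq_zero, not_and] at hu
    obtain ⟨⟨hb1, hb2⟩, h0, hne⟩ := hu
    refine ⟨((u1,u2),(u1,u2),(k-2*u1, l-2*u2)), ?_, rfl⟩
    simp only [Finset.mem_filter, mem_OrdT, Prod.mk.injEq, Prod.mk_add_mk,
      Prod.mk_eq_zero, Ne, not_and, Prod.fst_zero, Prod.snd_zero]
    exact ⟨⟨⟨by omega, by omega⟩, h0, h0, by omega⟩, trivial⟩

lemma u_card_odd (k l : ℕ) (hk : Odd k) (hl : Odd l) :
    ((box (k/2) (l/2)).filter (fun u => u ≠ 0 ∧ ¬(2*u.1 = k ∧ 2*u.2 = l))).card + 1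
      = (k/2+1)*(l/2+1) := by
  classical
  obtain ⟨a, rfl⟩ := hk
  obtain ⟨b, rfl⟩ := hl
  have he : ((box ((2*a+1)/2) ((2*b+1)/2)).filter
      (fun u => u ≠ 0 ∧ ¬(2*u.1 = 2*a+1 ∧ 2*u.2 = 2*b+1)))
      = (box ((2*a+1)/2) ((2*b+1)/2)).erase 0 := by
    ext ⟨u1, u2⟩
    simp only [Finset.mem_filter, Finset.mem_erase, Ne, Prod.mk_eq_zero, not_and]
    constructor
    · rintro ⟨h1, h2, _⟩; exact ⟨h2, h1⟩
    · rintro ⟨h1, h2⟩; exact ⟨h2, h1, by omega⟩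
  rw [he, Finset.card_erase_of_mem (by simp [box, Finset.mem_product])]
  have hc : (box ((2*a+1)/2) ((2*b+1)/2)).card = ((2*a+1)/2+1)*((2*b+1)/2+1) := by
    simp [box, Finset.card_range]
  rw [hc]
  have h1 : 0 < ((2*a+1)/2+1)*((2*b+1)/2+1) := Nat.mul_pos (by omega) (by omega)
  omega

lemma u_card_even (k l : ℕ) (hk : 2 ∣ k) (hl : 2 ∣ l) (h0 : ¬(k = 0 ∧ l = 0)) :
    ((box (k/2) (l/2)).filter (fun u => u ≠ 0 ∧ ¬(2*u.1 = k ∧ 2*u.2 = l))).card + 2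
      = (k/2+1)*(l/2+1) := by
  classical
  obtain ⟨a, rfl⟩ := hk
  obtain ⟨b, rfl⟩ := hl
  have he : ((box ((2*a)/2) ((2*b)/2)).filter
      (fun u => u ≠ 0 ∧ ¬(2*u.1 = 2*a ∧ 2*u.2 = 2*b)))
      = (box (a, b).1 (a, b).2).filter (fun u => u ≠ 0 ∧ u ≠ ((a, b) : P)) := by
    have e1 : (2*a)/2 = a := by omega
    have e2 : (2*b)/2 = b := by omega
    rw [e1, e2]
    apply Finset.filter_congr
    intro ⟨u1, u2⟩ _
    simp only [Ne, Prod.mk.injEq, not_and, Prod.mk_eq_zero]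
    constructor
    · rintro ⟨h1, h2⟩; exact ⟨h1, by intro h3 h4; exact h2 (by omega) (by omega)⟩
    · rintro ⟨h1, h2⟩; exact ⟨h1, by intro h3 h4; exact h2 (by omega) (by omega)⟩
  rw [he, box_filter_card (a, b) (by
    simp only [Ne, Prod.mk_eq_zero, not_and]
    intro h1 h2
    exact h0 (by omega))]
  have e1 : (2*a)/2 = a := by omega
  have e2 : (2*b)/2 = b := by omega
  rw [e1, e2]

lemma tset_card_le_one (k l : ℕ) :
    ((OrdT k l).filter (fun t => t.1 = t.2.1 ∧ t.2.1 = t.2.2)).card ≤ 1 := by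
  apply Finset.card_le_one.2
  intro t ht u hu
  simp only [Finset.mem_filter, mem_OrdT] at ht hu
  obtain ⟨⟨a1,a2⟩,⟨b1,b2⟩,⟨c1,c2⟩⟩ := t
  obtain ⟨⟨a1',a2'⟩,⟨b1',b2'⟩,⟨c1',c2'⟩⟩ := u
  simp only [Prod.mk.injEq, Prod.mk_add_mk, Prod.mk_eq_zero, Ne, not_and,
    Prod.fst_zero, Prod.snd_zero] at *
  omega

lemma tset_card_eq_zero (k l : ℕ) (h : ¬(3 ∣ k ∧ 3 ∣ l)) :
    ((OrdT k l).filter (fun t => t.1 = t.2.1 ∧ t.2.1 = t.2.2)).card = 0 := by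
  rw [Finset.card_eq_zero]
  ext t
  simp only [Finset.mem_filter, mem_OrdT, Finset.notMem_empty, iff_false, not_and]
  obtain ⟨⟨a1,a2⟩,⟨b1,b2⟩,⟨c1,c2⟩⟩ := t
  simp only [Prod.mk.injEq, Prod.mk_add_mk, Prod.mk_eq_zero, Ne, not_and,
    Prod.fst_zero, Prod.snd_zero]
  rintro ⟨⟨hs1, hs2⟩, -⟩ ⟨e1, e2⟩ e3 e4
  exact h ⟨⟨c1, by omega⟩, ⟨c2, by omega⟩⟩

end VP3

namespace VP3

lemma arith (a b N N' M M' T T' : ℕ)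
    (hN : 4*N + 12*((2*a+2)*(2*b+2)) = (2*a+2)*(2*a+3)*((2*b+2)*(2*b+3)) + 12)
    (hN' : 4*N' + 12*((2*a+3)*(2*b+1)) = (2*a+3)*(2*a+4)*((2*b+1)*(2*b+2)) + 12)
    (hM : M + 1 = (a+1)*(b+1))
    (hM' : M' + 2 = (a+2)*(b+1))
    (hba : b ≤ a) (ha : 1 ≤ a)
    (hT' : (T' = 0) ∨ (T' ≤ 1 ∧ b < a)) :
    N' + 3*M' + 2*T' < N + 3*M + 2*T := by
  have haz : (1 : ℤ) ≤ (a : ℤ) := by exact_mod_cast ha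
  rcases hT' with rfl | ⟨hT1, hlt⟩
  · rcases Nat.eq_or_lt_of_le hba with heq | hlt
    · subst heq
      zify at hN hN' hM hM' ⊢
      push_cast
      nlinarith [sq_nonneg ((b : ℤ) - 1), sq_nonneg ((b : ℤ) + 1), hN, hN', hM, hM', haz]
    · have hd : (1 : ℤ) ≤ (a : ℤ) - b := by
        have : (b : ℤ) + 1 ≤ a := by exact_mod_cast hlt
        linarith
      zify at hN hN' hM hM' ⊢
      push_cast
      nlinarith [hN, hN', hM, hM', hd,
        mul_nonneg (mul_nonneg (Int.ofNat_nonneg b) (Int.ofNat_nonneg b))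
          (by linarith : (0:ℤ) ≤ (a:ℤ) - b),
        sq_nonneg ((b : ℤ)),
        mul_nonneg (Int.ofNat_nonneg b) (by linarith : (0:ℤ) ≤ (a:ℤ) - b - 1)]
  · have hT1' : (T' : ℤ) ≤ 1 := by exact_mod_cast hT1
    have hd : (1 : ℤ) ≤ (a : ℤ) - b := by
      have : (b : ℤ) + 1 ≤ a := by exact_mod_cast hlt
      linarith
    zify at hN hN' hM hM' ⊢
    push_cast
    nlinarith [hN, hN', hM, hM', hd, hT1',
      mul_nonneg (mul_nonneg (Int.ofNat_nonneg b) (Int.ofNat_nonneg b))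
        (by linarith : (0:ℤ) ≤ (a:ℤ) - b),
      sq_nonneg ((b : ℤ)),
      mul_nonneg (Int.ofNat_nonneg b) (by linarith : (0:ℤ) ≤ (a:ℤ) - b - 1)]

end VP3

/-- For `k ≥ l ≥ 1` both odd with `(k,l) ≠ (1,1)`, `p₃(k,l) > p₃(k+1, l-1)`. -/
theorem vectorPartitions2_three_strict_anti (k l : ℕ) (hl : 1 ≤ l) (hkl : l ≤ k)
    (hk : Odd k) (hlodd : Odd l) (hne : (k, l) ≠ (1, 1)) :
    vectorPartitions2 3 (k + 1) (l - 1) < vectorPartitions2 3 k l := by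
  classical
  obtain ⟨a, rfl⟩ := hk
  obtain ⟨b, rfl⟩ := hlodd
  have hba : b ≤ a := by omega
  have ha : 1 ≤ a := by
    by_contra h
    push_neg at h
    interval_cases a <;> simp_all <;> omega
  have e1 : 2*a+1+1 = 2*a+2 := by omega
  have e2 : 2*b+1-1 = 2*b := by omega
  rw [e1, e2, VP3.p3_eq, VP3.p3_eq]
  have h6 : 6 * (VP3.SortT (2*a+2) (2*b) ).card < 6 * (VP3.SortT (2*a+1) (2*b+1)).card → 
      (VP3.SortT (2*a+2) (2*b)).card < (VP3.SortT (2*a+1) (2*b+1)).card := by omega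
  apply h6
  rw [← VP3.burnside, ← VP3.burnside]
  -- counts
  have hN := VP3.ordT_card (2*a+1) (2*b+1) (by omega)
  have hN' := VP3.ordT_card (2*a+2) (2*b) (by omega)
  have hMeq := VP3.mset_card_bij (2*a+1) (2*b+1)
  have hMeq' := VP3.mset_card_bij (2*a+2) (2*b)
  have hMo := VP3.u_card_odd (2*a+1) (2*b+1) ⟨a, by omega⟩ ⟨b, by omega⟩
  have hMe := VP3.u_card_even (2*a+2) (2*b) ⟨a+1, by omega⟩ ⟨b, by omega⟩ (by omega)
  rw [← hMeq] at hMo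
  rw [← hMeq'] at hMe
  have d1 : (2*a+1)/2 = a := by omega
  have d2 : (2*b+1)/2 = b := by omega
  have d3 : (2*a+2)/2 = a+1 := by omega
  have d4 : (2*b)/2 = b := by omega
  rw [d1, d2] at hMo
  rw [d3, d4] at hMe
  have hT' : (((VP3.OrdT (2*a+2) (2*b)).filter
        (fun t => t.1 = t.2.1 ∧ t.2.1 = t.2.2)).card = 0) ∨
      ((((VP3.OrdT (2*a+2) (2*b)).filter
        (fun t => t.1 = t.2.1 ∧ t.2.1 = t.2.2)).card ≤ 1) ∧ b < a) := by
    by_cases h3 : 3 ∣ (2*a+2) ∧ 3 ∣ (2*b)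
    · right
      refine ⟨VP3.tset_card_le_one _ _, ?_⟩
      rcases Nat.eq_or_lt_of_le hba with rfl | h
      · obtain ⟨h31, h32⟩ := h3
        omega
      · exact h
    · left
      exact VP3.tset_card_eq_zero _ _ h3
  have f1 : 2*a+1+1 = 2*a+2 := by omega
  have f2 : 2*a+1+2 = 2*a+3 := by omega
  have f3 : 2*b+1+1 = 2*b+2 := by omega
  have f4 : 2*b+1+2 = 2*b+3 := by omega
  have f5 : 2*a+2+1 = 2*a+3 := by omega
  have f6 : 2*a+2+2 = 2*a+4 := by omega
  have f7 : a+1+1 = a+2 := by omega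
  rw [f1, f2, f3, f4] at hN
  rw [f5, f6] at hN'
  rw [f7] at hMe
  exact VP3.arith a b _ _ _ _ _ _ hN hN' hMo hMe hba ha hT'
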